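/- arXiv:1611.07354 — 3 statements merged into one kernel-verified Lean document; each statement's English description precedes it below -/
import Mathlib

section
/- For all integers d ≥ 2 and n ≥ d, every dual graph of type (d,n) has diameter at most 2^{d−2}·(n−d); that is, μ(d,n) ≤ 2^{d−2}(n−d). -/
open SimpleGraph


namespace DualGraphProof

open Finset

variable {α : Type*} [DecidableEq α]

/-- active symbols of layers `0..k` -/
def act (L : ℕ → Finset (Finset α)) (k : ℕ) : Finset α :=
  (Finset.range (k+1)).biUnion fun j => (L j).biUnion id

/-- Layered family abstraction of distance layers of a dual graph. -/
structure IsLF (d k : ℕ) (L : ℕ → Finset (Finset α)) : Prop where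
  nonempty : ∀ j, j ≤ k → (L j).Nonempty
  card_eq : ∀ j, j ≤ k → ∀ x ∈ L j, x.card = d
  conn : ∀ (A : Finset α) (i j l : ℕ), i ≤ j → j ≤ l → l ≤ k →
    (∃ x ∈ L i, A ⊆ x) → (∃ y ∈ L l, A ⊆ y) → ∃ z ∈ L j, A ⊆ z
  ne : ∀ i j, i < j → j ≤ k → ∀ x ∈ L i, ∀ y ∈ L j, x ≠ y
  far : ∀ i j, i + 2 ≤ j → j ≤ k → ∀ x ∈ L i, ∀ y ∈ L j, (x ∩ y).card + 2 ≤ d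

lemma mem_act {L : ℕ → Finset (Finset α)} {k j : ℕ} (hj : j ≤ k) {x : Finset α}
    (hx : x ∈ L j) {s : α} (hs : s ∈ x) : s ∈ act L k := by
  simp only [act, Finset.mem_biUnion, Finset.mem_range]
  exact ⟨j, by omega, x, hx, hs⟩

lemma mem_act_iff {L : ℕ → Finset (Finset α)} {k : ℕ} {s : α} :
    s ∈ act L k ↔ ∃ j, j ≤ k ∧ ∃ x ∈ L j, s ∈ x := by
  simp only [act, Finset.mem_biUnion, Finset.mem_range]
  constructor
  · rintro ⟨j, hj, x, hx, hs⟩; exact ⟨j, by omega, x, hx, hs⟩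
  · rintro ⟨j, hj, x, hx, hs⟩; exact ⟨j, by omega, x, hx, hs⟩

lemma IsLF.mono {d k k' : ℕ} {L : ℕ → Finset (Finset α)} (h : IsLF d k L) (hk : k' ≤ k) :
    IsLF d k' L where
  nonempty := fun j hj => h.nonempty j (hj.trans hk)
  card_eq := fun j hj => h.card_eq j (hj.trans hk)
  conn := fun A i j l hij hjl hlk => h.conn A i j l hij hjl (hlk.trans hk)
  ne := fun i j hij hj => h.ne i j hij (hj.trans hk)
  far := fun i j hij hj => h.far i j hij (hj.trans hk)

lemma IsLF.shift {d k a k' : ℕ} {L : ℕ → Finset (Finset α)} (h : IsLF d k L)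
    (hk : a + k' ≤ k) : IsLF d k' (fun j => L (a + j)) where
  nonempty := fun j hj => h.nonempty (a+j) (by omega)
  card_eq := fun j hj => h.card_eq (a+j) (by omega)
  conn := fun A i j l hij hjl hlk hx hy =>
    h.conn A (a+i) (a+j) (a+l) (by omega) (by omega) (by omega) hx hy
  ne := fun i j hij hj => h.ne (a+i) (a+j) (by omega) (by omega)
  far := fun i j hij hj => h.far (a+i) (a+j) (by omega) (by omega)

/-- Base case: a layered family of dimension 2 has `k + 2 ≤ N`. -/
lemma base_case {k : ℕ} {L : ℕ → Finset (Finset α)} (h : IsLF 2 k L) :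
    k + 2 ≤ (act L k).card := by
  classical
  -- choose a set in each layer
  have hx : ∀ j, j ≤ k → ∃ x, x ∈ L j := fun j hj => h.nonempty j hj
  choose! x hxmem using hx
  -- union of chosen sets grows
  have key : ∀ j, j ≤ k → j + 2 ≤ ((Finset.range (j+1)).biUnion x).card := by
    intro j
    induction j with
    | zero =>
      intro _
      show 0 + 2 ≤ ((Finset.range 1).biUnion x).card
      have h0 := h.card_eq 0 (by omega) (x 0) (hxmem 0 (by omega))
      have : x 0 ⊆ (Finset.range 1).biUnion x := by
        intro a ha; simp only [Finset.mem_biUnion, Finset.mem_range]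
        exact ⟨0, by omega, ha⟩
      have := Finset.card_le_card this
      omega
    | succ j ih =>
      intro hjk
      show j + 1 + 2 ≤ ((Finset.range (j+2)).biUnion x).card
      have hj : j ≤ k := by omega
      have hne := h.ne j (j+1) (by omega) hjk (x j) (hxmem j hj) (x (j+1)) (hxmem (j+1) hjk)
      have hcj := h.card_eq j hj (x j) (hxmem j hj)
      have hcj1 := h.card_eq (j+1) hjk (x (j+1)) (hxmem (j+1) hjk)
      -- there is c ∈ x (j+1) \ x j
      have hnotsub : ¬ (x (j+1) ⊆ x j) := by
        intro hsub
        exact hne.symm (Finset.eq_of_subset_of_card_le hsub (by omega))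
      obtain ⟨c, hc1, hc2⟩ := Finset.not_subset.mp hnotsub
      -- c not in earlier sets
      have hcnot : c ∉ (Finset.range (j+1)).biUnion x := by
        simp only [Finset.mem_biUnion, Finset.mem_range, not_exists]
        rintro i ⟨hi, hci⟩
        have hik : i ≤ k := by omega
        rcases Nat.lt_or_ge i j with hij | hij
        · have hfar := h.far i (j+1) (by omega) hjk (x i) (hxmem i hik) (x (j+1)) (hxmem (j+1) hjk)
          have : c ∈ x i ∩ x (j+1) := Finset.mem_inter.mpr ⟨hci, hc1⟩
          have := Finset.card_pos.mpr ⟨c, this⟩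
          omega
        · have : i = j := by omega
          subst this
          exact hc2 hci
      have hsub2 : insert c ((Finset.range (j+1)).biUnion x) ⊆ (Finset.range (j+2)).biUnion x := by
        intro a ha
        rcases Finset.mem_insert.mp ha with rfl | ha
        · simp only [Finset.mem_biUnion, Finset.mem_range]
          exact ⟨j+1, by omega, hc1⟩
        · simp only [Finset.mem_biUnion, Finset.mem_range] at ha ⊢
          obtain ⟨i, hi, hai⟩ := ha
          exact ⟨i, by omega, hai⟩
      have := Finset.card_le_card hsub2
      rw [Finset.card_insert_of_notMem hcnot] at this
      have := ih hj
      omega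
  have hsub : (Finset.range (k+1)).biUnion x ⊆ act L k := by
    intro a ha
    simp only [Finset.mem_biUnion, Finset.mem_range] at ha
    obtain ⟨i, hi, hai⟩ := ha
    exact mem_act (by omega) (hxmem i (by omega)) hai
  have := Finset.card_le_card hsub
  have := key k le_rfl
  omega


/-- the link (star) construction -/
def starL (L : ℕ → Finset (Finset α)) (s : α) : ℕ → Finset (Finset α) :=
  fun j => ((L j).filter (fun x => s ∈ x)).image (fun x => x.erase s)

lemma mem_starL {L : ℕ → Finset (Finset α)} {s : α} {j : ℕ} {y : Finset α} :
    y ∈ starL L s j ↔ ∃ x ∈ L j, s ∈ x ∧ y = x.erase s := by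
  simp only [starL, Finset.mem_image, Finset.mem_filter]
  constructor
  · rintro ⟨x, ⟨hx, hsx⟩, rfl⟩; exact ⟨x, hx, hsx, rfl⟩
  · rintro ⟨x, hx, hsx, rfl⟩; exact ⟨x, ⟨hx, hsx⟩, rfl⟩

lemma IsLF.star {d k : ℕ} {L : ℕ → Finset (Finset α)} (h : IsLF (d+1) k L) {s : α}
    (h0 : ∃ x ∈ L 0, s ∈ x) (hk : ∃ y ∈ L k, s ∈ y) : IsLF d k (starL L s) where
  nonempty := by
    intro j hj
    obtain ⟨z, hz, hsz⟩ := h.conn {s} 0 j k (by omega) hj le_rfl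
      (by obtain ⟨x, hx, hsx⟩ := h0; exact ⟨x, hx, Finset.singleton_subset_iff.mpr hsx⟩)
      (by obtain ⟨y, hy, hsy⟩ := hk; exact ⟨y, hy, Finset.singleton_subset_iff.mpr hsy⟩)
    exact ⟨z.erase s, mem_starL.mpr ⟨z, hz, Finset.singleton_subset_iff.mp hsz, rfl⟩⟩
  card_eq := by
    intro j hj y hy
    obtain ⟨x, hx, hsx, rfl⟩ := mem_starL.mp hy
    rw [Finset.card_erase_of_mem hsx, h.card_eq j hj x hx]; omega
  conn := by
    intro A i j l hij hjl hlk ⟨x', hx', hAx⟩ ⟨y', hy', hAy⟩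
    obtain ⟨x, hx, hsx, rfl⟩ := mem_starL.mp hx'
    obtain ⟨y, hy, hsy, rfl⟩ := mem_starL.mp hy'
    have hsA : s ∉ A := fun hsA => (Finset.mem_erase.mp (hAx hsA)).1 rfl
    obtain ⟨z, hz, hAz⟩ := h.conn (insert s A) i j l hij hjl hlk
      ⟨x, hx, Finset.insert_subset hsx (hAx.trans (Finset.erase_subset _ _))⟩
      ⟨y, hy, Finset.insert_subset hsy (hAy.trans (Finset.erase_subset _ _))⟩
    refine ⟨z.erase s, mem_starL.mpr ⟨z, hz, hAz (Finset.mem_insert_self _ _), rfl⟩, ?_⟩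
    intro a ha
    exact Finset.mem_erase.mpr ⟨fun h' => hsA (h' ▸ ha), hAz (Finset.mem_insert_of_mem ha)⟩
  ne := by
    intro i j hij hj x' hx' y' hy' heq
    obtain ⟨x, hx, hsx, rfl⟩ := mem_starL.mp hx'
    obtain ⟨y, hy, hsy, rfl⟩ := mem_starL.mp hy'
    have : x = y := by
      rw [← Finset.insert_erase hsx, ← Finset.insert_erase hsy, heq]
    exact h.ne i j hij hj x hx y hy this
  far := by
    intro i j hij hj x' hx' y' hy'
    obtain ⟨x, hx, hsx, rfl⟩ := mem_starL.mp hx'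
    obtain ⟨y, hy, hsy, rfl⟩ := mem_starL.mp hy'
    have hfar := h.far i j hij hj x hx y hy
    have heq : x.erase s ∩ y.erase s = (x ∩ y).erase s := by
      ext a
      simp only [Finset.mem_inter, Finset.mem_erase]
      tauto
    rw [heq, Finset.card_erase_of_mem (Finset.mem_inter.mpr ⟨hsx, hsy⟩)]
    have : 0 < (x ∩ y).card := Finset.card_pos.mpr ⟨s, Finset.mem_inter.mpr ⟨hsx, hsy⟩⟩
    omega

lemma act_starL_subset {L : ℕ → Finset (Finset α)} {s : α} {k : ℕ} :
    act (starL L s) k ⊆ (act L k).erase s := by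
  intro a ha
  obtain ⟨j, hj, y, hy, hay⟩ := mem_act_iff.mp ha
  obtain ⟨x, hx, hsx, rfl⟩ := mem_starL.mp hy
  exact Finset.mem_erase.mpr ⟨(Finset.mem_erase.mp hay).1,
    mem_act hj hx (Finset.mem_of_mem_erase hay)⟩


lemma phi (c : ℕ)
    (IH : ∀ (k : ℕ) (L : ℕ → Finset (Finset α)), IsLF (c+2) k L →
      k + 2^c * (c+2) ≤ 2^c * (act L k).card) :
    ∀ (k : ℕ) (L : ℕ → Finset (Finset α)), IsLF (c+3) k L →
      k + 2^c * ((c+3) + ((L 0).biUnion id).card) ≤ 2^c * (2 * (act L k).card) := by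
  intro k
  induction k using Nat.strong_induction_on with
  | _ k ihk =>
  intro L hLF
  classical
  set T : Finset ℕ := (Finset.range (k+1)).filter
      (fun l => ∃ x ∈ L 0, ∃ y ∈ L l, (x ∩ y).Nonempty) with hT
  have h0T : 0 ∈ T := by
    obtain ⟨x0, hx0⟩ := hLF.nonempty 0 (by omega)
    have hc := hLF.card_eq 0 (by omega) x0 hx0
    refine Finset.mem_filter.mpr ⟨Finset.mem_range.mpr (by omega), x0, hx0, x0, hx0, ?_⟩
    rw [Finset.inter_self]
    exact Finset.card_pos.mp (by omega)
  have hTne : T.Nonempty := ⟨0, h0T⟩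
  set t := T.max' hTne with htdef
  have htT : t ∈ T := T.max'_mem hTne
  have htk : t ≤ k := by
    have h1 := (Finset.mem_filter.mp htT).1
    have := Finset.mem_range.mp h1; omega
  obtain ⟨xs, hxs, ys, hys, hshare⟩ := (Finset.mem_filter.mp htT).2
  obtain ⟨s, hs⟩ := hshare
  have hsx : s ∈ xs := (Finset.mem_inter.mp hs).1
  have hsy : s ∈ ys := (Finset.mem_inter.mp hs).2
  have htmax : ∀ l, l ≤ k → (∃ x ∈ L 0, ∃ y ∈ L l, (x ∩ y).Nonempty) → l ≤ t := by
    intro l hl hex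
    exact T.le_max' l (Finset.mem_filter.mpr ⟨Finset.mem_range.mpr (by omega), hex⟩)
  -- segment 1 (star) bound
  have hLF1 : IsLF (c+3) t L := hLF.mono htk
  have hstar : IsLF (c+2) t (starL L s) :=
    IsLF.star (d := c+2) hLF1 ⟨xs, hxs, hsx⟩ ⟨ys, hys, hsy⟩
  have hseg := IH t (starL L s) hstar
  have hsact : s ∈ act L t := mem_act (Nat.zero_le t) hxs hsx
  have hcard1 : (act (starL L s) t).card + 1 ≤ (act L t).card := by
    have h1 := Finset.card_le_card (act_starL_subset (L := L) (s := s) (k := t))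
    rw [Finset.card_erase_of_mem hsact] at h1
    have : 0 < (act L t).card := Finset.card_pos.mpr ⟨s, hsact⟩
    omega
  have hp : (1:ℕ) ≤ 2^c := Nat.one_le_two_pow
  have hseg' : t + 2^c * (c+3) ≤ 2^c * (act L t).card := by
    have e1 : 2^c * (c+3) = 2^c * (c+2) + 2^c := by ring
    have e2 := Nat.mul_le_mul_left (2^c) hcard1
    have e3 : 2^c * ((act (starL L s) t).card + 1)
        = 2^c * (act (starL L s) t).card + 2^c := by ring
    linarith
  have hBsub : (L 0).biUnion id ⊆ act L t := by
    intro a ha; obtain ⟨x, hx, hax⟩ := Finset.mem_biUnion.mp ha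
    exact mem_act (Nat.zero_le t) hx hax
  by_cases hcase : t = k
  · rw [hcase] at hseg' hBsub
    have hβ := Finset.card_le_card hBsub
    have e1 : 2^c * ((c+3) + ((L 0).biUnion id).card)
        = 2^c * (c+3) + 2^c * ((L 0).biUnion id).card := by ring
    have e2 : 2^c * (2 * (act L k).card) = 2^c * (act L k).card + 2^c * (act L k).card := by
      ring
    have e3 := Nat.mul_le_mul_left (2^c) hβ
    linarith
  -- main case : t < k
  have htk' : t + 1 ≤ k := by omega
  set L' := (fun j => L (t + 1 + j)) with hL'def
  set k2 := k - (t+1) with hk2def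
  have hLF' : IsLF (c+3) k2 L' := hLF.shift (by omega)
  have hsuf := ihk k2 (by omega) L' hLF'
  set A1 := act L t with hA1
  set Act2 := act L' k2 with hAct2
  set B := (L 0).biUnion id with hB
  set B2 := (L' 0).biUnion id with hB2
  have hsplit : act L k = A1 ∪ Act2 := by
    ext a
    simp only [Finset.mem_union]
    constructor
    · intro ha
      obtain ⟨j, hj, x, hx, hax⟩ := mem_act_iff.mp ha
      rcases le_or_gt j t with hjt | hjt
      · exact Or.inl (mem_act hjt hx hax)
      · refine Or.inr (mem_act (L := L') (k := k2) (j := j - (t+1)) (by omega) ?_ hax)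
        show x ∈ L (t + 1 + (j - (t+1)))
        rw [show t + 1 + (j - (t+1)) = j by omega]
        exact hx
    · intro ha
      rcases ha with ha | ha
      · obtain ⟨j, hj, x, hx, hax⟩ := mem_act_iff.mp ha
        exact mem_act (k := k) (by omega) hx hax
      · obtain ⟨j, hj, x, hx, hax⟩ := mem_act_iff.mp ha
        exact mem_act (k := k) (j := t + 1 + j) (by omega) hx hax
  have hBdead : Disjoint B Act2 := by
    rw [Finset.disjoint_left]
    intro a haB haA
    obtain ⟨x, hx, hax⟩ := Finset.mem_biUnion.mp haB
    obtain ⟨j, hj, y, hy, hay⟩ := mem_act_iff.mp haA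
    have hle : t + 1 + j ≤ t := htmax (t+1+j) (by omega)
      ⟨x, hx, y, hy, ⟨a, Finset.mem_inter.mpr ⟨hax, hay⟩⟩⟩
    omega
  have hGamma : A1 ∩ Act2 ⊆ B2 := by
    intro a ha
    obtain ⟨ha1, ha2⟩ := Finset.mem_inter.mp ha
    obtain ⟨i, hi, x, hx, hax⟩ := mem_act_iff.mp ha1
    obtain ⟨j, hj, y, hy, hay⟩ := mem_act_iff.mp ha2
    obtain ⟨z, hz, haz⟩ := hLF.conn {a} i (t+1) (t+1+j) (by omega) (by omega) (by omega)
      ⟨x, hx, Finset.singleton_subset_iff.mpr hax⟩ ⟨y, hy, Finset.singleton_subset_iff.mpr hay⟩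
    exact Finset.mem_biUnion.mpr ⟨z, hz, Finset.singleton_subset_iff.mp haz⟩
  have hNgam : (act L k).card + (A1 ∩ Act2).card = A1.card + Act2.card := by
    rw [hsplit]; exact Finset.card_union_add_card_inter _ _
  have hbgam : B.card + (A1 ∩ Act2).card ≤ A1.card := by
    have hdisj : Disjoint B (A1 ∩ Act2) := hBdead.mono_right Finset.inter_subset_right
    have hsub : B ∪ (A1 ∩ Act2) ⊆ A1 := Finset.union_subset hBsub Finset.inter_subset_left
    have h1 := Finset.card_le_card hsub
    rwa [Finset.card_union_of_disjoint hdisj] at h1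
  have hgb2 : (A1 ∩ Act2).card ≤ B2.card := Finset.card_le_card hGamma
  -- final arithmetic
  have hkeq : k = t + 1 + k2 := by omega
  have m1 : 2^c * B.card + 2^c * (A1 ∩ Act2).card ≤ 2^c * A1.card := by
    have := Nat.mul_le_mul_left (2^c) hbgam
    rw [Nat.mul_add] at this; exact this
  have m2 : 2^c * (A1 ∩ Act2).card ≤ 2^c * B2.card := Nat.mul_le_mul_left (2^c) hgb2
  have m3 : 2^c * (act L k).card + 2^c * (A1 ∩ Act2).card
      = 2^c * A1.card + 2^c * Act2.card := by
    have := congrArg (fun z => 2^c * z) hNgam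
    simp only [Nat.mul_add] at this
    exact this
  have m4 : (1:ℕ) ≤ 2^c * (c+3) := by
    calc (1:ℕ) = 1 * 1 := by ring
    _ ≤ 2^c * (c+3) := Nat.mul_le_mul hp (by omega)
  have e1 : 2^c * ((c+3) + B.card) = 2^c * (c+3) + 2^c * B.card := by ring
  have e2 : 2^c * ((c+3) + B2.card) = 2^c * (c+3) + 2^c * B2.card := by ring
  have e3 : 2^c * (2 * (act L k).card) = 2^c * (act L k).card + 2^c * (act L k).card := by ring
  have e4 : 2^c * (2 * Act2.card) = 2^c * Act2.card + 2^c * Act2.card := by ring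
  linarith

lemma LF_bound : ∀ (c k : ℕ) (L : ℕ → Finset (Finset α)), IsLF (c+2) k L →
    k + 2^c * (c+2) ≤ 2^c * (act L k).card := by
  intro c
  induction c with
  | zero =>
    intro k L h
    have := base_case h
    simpa using this
  | succ c ih =>
    intro k L h
    have hphi := phi c ih k L h
    obtain ⟨x0, hx0⟩ := h.nonempty 0 (Nat.zero_le k)
    have hx0c := h.card_eq 0 (Nat.zero_le k) x0 hx0
    have hbeta : c + 3 ≤ ((L 0).biUnion id).card := by
      have hsub : x0 ⊆ (L 0).biUnion id := fun a ha => Finset.mem_biUnion.mpr ⟨x0, hx0, ha⟩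
      have := Finset.card_le_card hsub
      omega
    have hmul : 2^c * (c+3) ≤ 2^c * ((L 0).biUnion id).card :=
      Nat.mul_le_mul_left (2^c) hbeta
    have e1 : 2^c * ((c+3) + ((L 0).biUnion id).card)
        = 2^c * (c+3) + 2^c * ((L 0).biUnion id).card := by ring
    have e2 : 2^(c+1) * (c+1+2) = 2^c * (c+3) + 2^c * (c+3) := by ring
    have e3 : 2^(c+1) * (act L k).card
        = 2^c * (act L k).card + 2^c * (act L k).card := by ring
    have e4 : 2^c * (2 * (act L k).card)
        = 2^c * (act L k).card + 2^c * (act L k).card := by ring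
    linarith


lemma nat_ivt (f : ℕ → ℕ) : ∀ (m j : ℕ), (∀ t, t < m → f (t+1) ≤ f t + 1) →
    f 0 ≤ j → j ≤ f m → ∃ t, t ≤ m ∧ f t = j := by
  intro m
  induction m with
  | zero => intro j _ h0 hm; exact ⟨0, le_rfl, by omega⟩
  | succ m ih =>
    intro j hstep h0 hm
    by_cases hj : j ≤ f m
    · obtain ⟨t, ht, hft⟩ := ih j (fun t ht => hstep t (by omega)) h0 hj
      exact ⟨t, by omega, hft⟩
    · have := hstep m (by omega)
      exact ⟨m+1, le_rfl, by omega⟩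

end DualGraphProof


/-- The graph on a family `V` of subsets of `{1,…,n}` in which two distinct
members are adjacent iff their intersection has `d - 1` elements
(property (ii) of a dual graph of type `(d,n)`). -/
def adjGraph (n d : ℕ) (V : Finset (Finset (Fin n))) :
    SimpleGraph {u : Finset (Fin n) // u ∈ V} where
  Adj u v := u ≠ v ∧ (u.1 ∩ v.1).card = d - 1
  symm := ⟨by
    rintro u v ⟨h1, h2⟩
    exact ⟨h1.symm, by rwa [Finset.inter_comm]⟩⟩
  loopless := ⟨fun u h => h.1 rfl⟩

/-- `V` is (the vertex set of) a dual graph of type `(d,n)`: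
a nonempty family of `d`-element subsets of `{1,…,n}` such that, with adjacency
given by property (ii), any two vertices `u`, `v` are joined by a walk all of
whose vertices contain `u ∩ v` (property (i)). -/
structure IsDualGraph (d n : ℕ) (V : Finset (Finset (Fin n))) : Prop where
  nonempty : V.Nonempty
  card_eq : ∀ u ∈ V, u.card = d
  locally_connected : ∀ u v : {x : Finset (Fin n) // x ∈ V},
    ∃ w : (adjGraph n d V).Walk u v, ∀ x ∈ w.support, u.1 ∩ v.1 ⊆ x.1

/-- μ(d,n) ≤ 2^(d−2)·(n−d) for all d ≥ 2 and n ≥ d. -/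
theorem mu_le_pow (d n : ℕ) (hd : 2 ≤ d) (hn : d ≤ n)
    (V : Finset (Finset (Fin n))) (hV : IsDualGraph d n V) :
    (adjGraph n d V).diam ≤ 2 ^ (d - 2) * (n - d) := by
  classical
  set G := adjGraph n d V with hG
  have hpre : G.Preconnected := fun a b => ((hV.locally_connected a b).choose).reachable
  have hne : Nonempty {u : Finset (Fin n) // u ∈ V} := by
    obtain ⟨x, hx⟩ := hV.nonempty; exact ⟨⟨x, hx⟩⟩
  have hconn : G.Connected := by haveI := hne; exact ⟨hpre⟩
  have hadj_dist : ∀ x y : {u : Finset (Fin n) // u ∈ V}, G.Adj x y → G.dist x y ≤ 1 := by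
    intro x y h
    have := SimpleGraph.dist_le (SimpleGraph.Walk.cons h SimpleGraph.Walk.nil)
    simpa using this
  have hdist : ∀ u v : {u : Finset (Fin n) // u ∈ V}, G.dist u v ≤ 2^(d-2) * (n-d) := by
    intro u v
    set k := G.dist u v with hk
    set L : ℕ → Finset (Finset (Fin n)) :=
      fun j => (V.attach.filter (fun x => G.dist u x = j)).image Subtype.val with hL
    have hmemL : ∀ (j : ℕ) (x : Finset (Fin n)),
        x ∈ L j ↔ ∃ h : x ∈ V, G.dist u ⟨x, h⟩ = j := by
      intro j x
      simp only [hL, Finset.mem_image, Finset.mem_filter, Finset.mem_attach, true_and]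
      constructor
      · rintro ⟨⟨y, hy⟩, hdy, rfl⟩; exact ⟨hy, hdy⟩
      · rintro ⟨hx, hdx⟩; exact ⟨⟨x, hx⟩, hdx, rfl⟩
    have hlayer : ∀ j, j ≤ k →
        ∃ w : {u : Finset (Fin n) // u ∈ V}, G.dist u w = j ∧ G.dist u w + G.dist w v = k := by
      intro j
      induction j with
      | zero =>
        intro _
        refine ⟨u, by simp [SimpleGraph.dist_self], ?_⟩
        simp [SimpleGraph.dist_self, hk]
      | succ j ih =>
        intro hjk
        obtain ⟨w, hw1, hw2⟩ := ih (by omega)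
        have hpos : 0 < G.dist w v := by omega
        obtain ⟨p, hp⟩ := hconn.exists_walk_length_eq_dist w v
        cases p with
        | nil =>
          rw [SimpleGraph.Walk.length_nil] at hp
          omega
        | cons hadj q =>
          rename_i y
          rw [SimpleGraph.Walk.length_cons] at hp
          have t1 := hconn.dist_triangle (u := u) (v := w) (w := y)
          have t2 := hadj_dist w y hadj
          have t3 := hconn.dist_triangle (u := u) (v := y) (w := v)
          have t4 := SimpleGraph.dist_le q
          refine ⟨y, by omega, by omega⟩
    have hLF : DualGraphProof.IsLF d k L := by
      constructor
      · -- nonempty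
        intro j hj
        obtain ⟨w, hw1, _⟩ := hlayer j hj
        exact ⟨w.1, (hmemL j w.1).mpr ⟨w.2, by simpa using hw1⟩⟩
      · -- card_eq
        intro j _ x hx
        obtain ⟨hxV, _⟩ := (hmemL j x).mp hx
        exact hV.card_eq x hxV
      · -- conn
        rintro A i j l hij hjl hlk ⟨x, hx, hAx⟩ ⟨y, hy, hAy⟩
        obtain ⟨hxV, hdx⟩ := (hmemL i x).mp hx
        obtain ⟨hyV, hdy⟩ := (hmemL l y).mp hy
        obtain ⟨w, hwsupp⟩ := hV.locally_connected ⟨x, hxV⟩ ⟨y, hyV⟩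
        have hstep : ∀ t, t < w.length →
            G.dist u (w.getVert (t+1)) ≤ G.dist u (w.getVert t) + 1 := by
          intro t ht
          have hadj := w.adj_getVert_succ ht
          have := hconn.dist_triangle (u := u) (v := w.getVert t) (w := w.getVert (t+1))
          have := hadj_dist _ _ hadj
          omega
        have h0 : G.dist u (w.getVert 0) = i := by
          rw [SimpleGraph.Walk.getVert_zero]; exact hdx
        have hm : G.dist u (w.getVert w.length) = l := by
          rw [SimpleGraph.Walk.getVert_length]; exact hdy
        obtain ⟨t, htm, hft⟩ := DualGraphProof.nat_ivt (fun t => G.dist u (w.getVert t))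
          w.length j hstep
          (by show G.dist u (w.getVert 0) ≤ j; omega)
          (by show j ≤ G.dist u (w.getVert w.length); omega)
        refine ⟨(w.getVert t).1, (hmemL j _).mpr ⟨(w.getVert t).2, by simpa using hft⟩, ?_⟩
        have hmem : w.getVert t ∈ w.support :=
          SimpleGraph.Walk.mem_support_iff_exists_getVert.mpr ⟨t, rfl, htm⟩
        have hsub := hwsupp _ hmem
        intro a ha
        exact hsub (Finset.mem_inter.mpr ⟨hAx ha, hAy ha⟩)
      · -- ne
        intro i j hij _ x hx y hy hxy
        obtain ⟨hxV, hdx⟩ := (hmemL i x).mp hx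
        obtain ⟨hyV, hdy⟩ := (hmemL j y).mp hy
        subst hxy
        have : i = j := by rw [← hdx, ← hdy]
        omega
      · -- far
        intro i j hij hjk x hx y hy
        obtain ⟨hxV, hdx⟩ := (hmemL i x).mp hx
        obtain ⟨hyV, hdy⟩ := (hmemL j y).mp hy
        by_contra hcon
        have hxc : x.card = d := hV.card_eq x hxV
        have hyc : y.card = d := hV.card_eq y hyV
        have hsub : x ∩ y ⊆ x := Finset.inter_subset_left
        have hle := Finset.card_le_card hsub
        have hxyne : x ≠ y := by
          intro hxy; subst hxy
          have : i = j := by rw [← hdx, ← hdy]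
          omega
        have hcne : (x ∩ y).card ≠ d := by
          intro hceq
          have : x ∩ y = x := Finset.eq_of_subset_of_card_le hsub (by omega)
          have hxsuby : x ⊆ y := by rw [← this]; exact Finset.inter_subset_right
          exact hxyne (Finset.eq_of_subset_of_card_le hxsuby (by omega))
        have hadj : G.Adj ⟨x, hxV⟩ ⟨y, hyV⟩ := by
          refine ⟨?_, ?_⟩
          · intro heq
            exact hxyne (congrArg Subtype.val heq)
          · show (x ∩ y).card = d - 1
            omega
        have := hadj_dist _ _ hadj
        have := hconn.dist_triangle (u := u) (v := ⟨x, hxV⟩) (w := ⟨y, hyV⟩)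
        omega
    have hbound := DualGraphProof.LF_bound (d-2) k L (by
      have hd2 : d - 2 + 2 = d := by omega
      rw [hd2]; exact hLF)
    have hNn : (DualGraphProof.act L k).card ≤ n := by
      have h1 : (DualGraphProof.act L k).card ≤ (Finset.univ : Finset (Fin n)).card :=
        Finset.card_le_univ _
      simpa using h1
    set p := 2^(d-2) with hpdef
    have hmul1 : p * (DualGraphProof.act L k).card ≤ p * n :=
      Nat.mul_le_mul_left p hNn
    have hsplitn : p * n = p * (n-d) + p * d := by
      rw [← Nat.mul_add, Nat.sub_add_cancel hn]
    have hd2' : d - 2 + 2 = d := by omega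
    rw [hd2'] at hbound
    linarith
  have hediam : G.ediam ≤ ((2^(d-2) * (n-d) : ℕ) : ℕ∞) := by
    rw [SimpleGraph.ediam_le_iff]
    intro a b
    obtain ⟨p, hp⟩ := hconn.exists_walk_length_eq_dist a b
    calc G.edist a b ≤ p.length := SimpleGraph.edist_le p
    _ = ((G.dist a b : ℕ) : ℕ∞) := by rw [hp]
    _ ≤ _ := by exact_mod_cast hdist a b
  exact ENat.toNat_le_of_le_coe hediam
end

section
/- For every integer n ≥ 2, μ(2,n) = n−2: every dual graph of type (2,n) has diameter at most n−2, and there exists a dual graph of type (2,n) whose diameter is exactly n−2. -/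
open SimpleGraph

namespace MuTwo

variable {n : ℕ} {V : Finset (Finset (Fin n))}

lemma conn (hV : IsDualGraph 2 n V) : (adjGraph n 2 V).Connected := by
  obtain ⟨x, hx⟩ := hV.nonempty
  haveI : Nonempty {u : Finset (Fin n) // u ∈ V} := ⟨⟨x, hx⟩⟩
  exact Connected.mk fun u v => (hV.locally_connected u v).elim fun w _ => ⟨w⟩

lemma exists_walk_to_getVert {α : Type*} {G : SimpleGraph α} {u v : α} (p : G.Walk u v)
    (i : ℕ) : ∃ q : G.Walk u (p.getVert i), q.length ≤ i := by
  induction p generalizing i with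
  | nil => exact ⟨Walk.nil.copy rfl rfl, by simp⟩
  | @cons a b c h q ih =>
    cases i with
    | zero => exact ⟨Walk.nil.copy rfl (by simp), by simp⟩
    | succ i =>
      obtain ⟨r, hr⟩ := ih i
      exact ⟨Walk.cons h r, by simpa using Nat.succ_le_succ hr⟩

lemma exists_walk_from_getVert {α : Type*} {G : SimpleGraph α} {u v : α} (p : G.Walk u v)
    (i : ℕ) : ∃ q : G.Walk (p.getVert i) v, q.length ≤ p.length - i := by
  induction p generalizing i with
  | nil => exact ⟨(Walk.nil).copy rfl rfl, by simp⟩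
  | @cons a b c h q ih =>
    cases i with
    | zero =>
      exact ⟨(Walk.cons h q).copy (by simp) rfl, by simp⟩
    | succ i =>
      obtain ⟨r, hr⟩ := ih i
      exact ⟨r, by simpa [Walk.length_cons] using hr⟩

lemma dist_le_sub (hn : 2 ≤ n) (hV : IsDualGraph 2 n V)
    (u v : {x : Finset (Fin n) // x ∈ V}) :
    (adjGraph n 2 V).dist u v ≤ n - 2 := by
  classical
  set G := adjGraph n 2 V with hG
  have hconn := conn hV
  obtain ⟨p, hp⟩ := hconn.exists_walk_length_eq_dist u v
  set k := G.dist u v with hk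
  -- geodesic property
  have hgeo : ∀ i, i ≤ k → G.dist u (p.getVert i) = i := by
    intro i hi
    obtain ⟨q1, hq1⟩ := exists_walk_to_getVert p i
    obtain ⟨q2, hq2⟩ := exists_walk_from_getVert p i
    have h1 : G.dist u (p.getVert i) ≤ i := le_trans (dist_le q1) hq1
    have h2 : G.dist (p.getVert i) v ≤ k - i := le_trans (dist_le q2) (by omega)
    have h3 : k ≤ G.dist u (p.getVert i) + G.dist (p.getVert i) v :=
      hconn.dist_triangle
    omega
  set e : ℕ → Finset (Fin n) := fun i => (p.getVert i).1 with he
  set S : ℕ → Finset (Fin n) := fun i => (Finset.range (i+1)).biUnion e with hS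
  have hcard2 : ∀ i, (e i).card = 2 := fun i => hV.card_eq _ (p.getVert i).2
  have key : ∀ i, i < k → ¬ (e (i+1) ⊆ S i) := by
    intro i hik hsub
    have hadj : G.Adj (p.getVert i) (p.getVert (i+1)) :=
      p.adj_getVert_succ (by omega)
    obtain ⟨hne, hcard⟩ : p.getVert i ≠ p.getVert (i+1) ∧ (e i ∩ e (i+1)).card = 1 := hadj
    obtain ⟨b, hb⟩ : ∃ b, e i ∩ e (i+1) = {b} := Finset.card_eq_one.mp hcard
    have hbmem : b ∈ e (i+1) := by
      have : b ∈ e i ∩ e (i+1) := hb ▸ Finset.mem_singleton_self b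
      exact Finset.mem_of_mem_inter_right this
    obtain ⟨a, hamem, hab⟩ : ∃ a ∈ e (i+1), a ≠ b :=
      Finset.exists_mem_ne (by rw [hcard2]; omega) b
    have hanotei : a ∉ e i := by
      intro h
      have : a ∈ e i ∩ e (i+1) := Finset.mem_inter.mpr ⟨h, hamem⟩
      rw [hb, Finset.mem_singleton] at this
      exact hab this
    obtain ⟨j, hj, haj⟩ : ∃ j < i + 1, a ∈ e j := by
      have := hsub hamem
      simpa [hS, Finset.mem_biUnion, Finset.mem_range] using this
    have hji : j < i := by
      rcases Nat.lt_or_ge j i with h | h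
      · exact h
      · exfalso; have : j = i := by omega
        exact hanotei (this ▸ haj)
    have hne2 : p.getVert j ≠ p.getVert (i+1) := by
      intro h
      have h1 := hgeo j (by omega)
      have h2 := hgeo (i+1) (by omega)
      rw [h] at h1; omega
    have hcardji : (e j ∩ e (i+1)).card = 1 := by
      have hle : (e j ∩ e (i+1)).card ≤ 2 := by
        calc (e j ∩ e (i+1)).card ≤ (e (i+1)).card :=
              Finset.card_le_card Finset.inter_subset_right
        _ = 2 := hcard2 _
      have hpos : 0 < (e j ∩ e (i+1)).card :=
        Finset.card_pos.mpr ⟨a, Finset.mem_inter.mpr ⟨haj, hamem⟩⟩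
      have hne3 : (e j ∩ e (i+1)).card ≠ 2 := by
        intro h2
        have hsub2 : e j ∩ e (i+1) = e (i+1) :=
          Finset.eq_of_subset_of_card_le Finset.inter_subset_right (by rw [hcard2, h2])
        have : e (i+1) ⊆ e j := by
          rw [← hsub2]; exact Finset.inter_subset_left
        have heq : e (i+1) = e j := Finset.eq_of_subset_of_card_le
          (by rw [← hsub2]; exact Finset.inter_subset_left) (by simp [hcard2])
        exact hne2 (Subtype.ext heq.symm)
      omega
    have hadj2 : G.Adj (p.getVert j) (p.getVert (i+1)) :=
      (show p.getVert j ≠ p.getVert (i+1) ∧ (e j ∩ e (i+1)).card = 1 from ⟨hne2, hcardji⟩)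
    obtain ⟨q, hq⟩ := hconn.exists_walk_length_eq_dist u (p.getVert j)
    have hd : G.dist u (p.getVert (i+1)) ≤ j + 1 := by
      have := dist_le (q.concat hadj2)
      rw [Walk.length_concat, hq, hgeo j (by omega)] at this
      exact this
    rw [hgeo (i+1) (by omega)] at hd
    omega
  have grow : ∀ i, i ≤ k → i + 2 ≤ (S i).card := by
    intro i
    induction i with
    | zero =>
      intro _
      have : S 0 = e 0 := by simp [hS]
      rw [this, hcard2]
    | succ i ih =>
      intro hik
      have h1 := ih (by omega)
      have hss : S i ⊆ S (i+1) := by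
        apply Finset.biUnion_subset_biUnion_of_subset_left
        exact Finset.range_subset_range.mpr (by omega)
      obtain ⟨x, hx1, hx2⟩ := Finset.not_subset.mp (key i (by omega))
      have hxS : x ∈ S (i+1) := by
        simp only [hS, Finset.mem_biUnion, Finset.mem_range]
        exact ⟨i+1, by omega, hx1⟩
      have : S i ⊂ S (i+1) := ⟨hss, fun h => hx2 (h hxS)⟩
      have := Finset.card_lt_card this
      omega
  have hfin : (S k).card ≤ n := by
    calc (S k).card ≤ (Finset.univ : Finset (Fin n)).card :=
          Finset.card_le_card (Finset.subset_univ _)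
    _ = n := Finset.card_fin n
  have := grow k le_rfl
  omega

lemma ediam_le (hn : 2 ≤ n) (hV : IsDualGraph 2 n V) :
    (adjGraph n 2 V).ediam ≤ ((n - 2 : ℕ) : ℕ∞) := by
  refine ediam_le_of_edist_le fun u v => ?_
  obtain ⟨p, hp⟩ := (conn hV).exists_walk_length_eq_dist u v
  calc (adjGraph n 2 V).edist u v ≤ p.length := p.edist_le
  _ ≤ ((n - 2 : ℕ) : ℕ∞) := by
      exact_mod_cast Nat.cast_le.mpr (hp ▸ dist_le_sub hn hV u v)

lemma diam_le (hn : 2 ≤ n) (hV : IsDualGraph 2 n V) :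
    (adjGraph n 2 V).diam ≤ n - 2 := by
  have := ENat.toNat_le_toNat (ediam_le hn hV) (by simp)
  rwa [ENat.toNat_coe] at this


def pe (n : ℕ) (hn : 2 ≤ n) (i : ℕ) : Finset (Fin n) :=
  {⟨i % n, Nat.mod_lt _ (by omega)⟩, ⟨(i+1) % n, Nat.mod_lt _ (by omega)⟩}

def pV (n : ℕ) (hn : 2 ≤ n) : Finset (Finset (Fin n)) :=
  (Finset.range (n-1)).image (pe n hn)


lemma pe_eq (hn : 2 ≤ n) {i : ℕ} (h : i < n - 1) :
    pe n hn i = ({⟨i, by omega⟩, ⟨i+1, by omega⟩} : Finset (Fin n)) := by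
  simp [pe, Nat.mod_eq_of_lt (show i < n by omega), Nat.mod_eq_of_lt (show i + 1 < n by omega)]

lemma mem_pe (hn : 2 ≤ n) {i : ℕ} (h : i < n - 1) {x : Fin n} :
    x ∈ pe n hn i ↔ (x : ℕ) = i ∨ (x : ℕ) = i + 1 := by
  rw [pe_eq hn h]
  simp [Fin.ext_iff]

lemma pe_card (hn : 2 ≤ n) {i : ℕ} (h : i < n - 1) : (pe n hn i).card = 2 := by
  rw [pe_eq hn h]
  rw [Finset.card_pair (by simp [Fin.ext_iff])]

lemma pe_inj (hn : 2 ≤ n) {i j : ℕ} (hi : i < n - 1) (hj : j < n - 1)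
    (h : pe n hn i = pe n hn j) : i = j := by
  have h1 : ∀ x : Fin n, ((x : ℕ) = i ∨ (x : ℕ) = i + 1) ↔ ((x : ℕ) = j ∨ (x : ℕ) = j + 1) :=
    fun x => by rw [← mem_pe hn hi, ← mem_pe hn hj, h]
  have h2 := h1 ⟨i, by omega⟩
  have h3 := h1 ⟨j, by omega⟩
  simp at h2 h3
  omega

def pv (n : ℕ) (hn : 2 ≤ n) (i : ℕ) (h : i < n - 1) : {x : Finset (Fin n) // x ∈ pV n hn} :=
  ⟨pe n hn i, Finset.mem_image_of_mem _ (Finset.mem_range.mpr h)⟩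

lemma pv_adj (hn : 2 ≤ n) {i : ℕ} (h : i + 1 < n - 1) :
    (adjGraph n 2 (pV n hn)).Adj (pv n hn i (by omega)) (pv n hn (i+1) h) := by
  show pv n hn i (by omega) ≠ pv n hn (i+1) h ∧ _
  constructor
  · intro heq
    have := pe_inj hn (by omega) h (congrArg Subtype.val heq)
    omega
  · have hint : pe n hn i ∩ pe n hn (i+1) = {(⟨i+1, by omega⟩ : Fin n)} := by
      ext x
      simp only [Finset.mem_inter, mem_pe hn (show i < n - 1 by omega),
        mem_pe hn h, Finset.mem_singleton, Fin.ext_iff]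
      omega
    show (pe n hn i ∩ pe n hn (i+1)).card = 1
    rw [hint, Finset.card_singleton]

lemma adj_idx (hn : 2 ≤ n) {i j : ℕ} (hi : i < n - 1) (hj : j < n - 1)
    (h : (adjGraph n 2 (pV n hn)).Adj (pv n hn i hi) (pv n hn j hj)) :
    j = i + 1 ∨ i = j + 1 := by
  obtain ⟨hne, hcard⟩ : pv n hn i hi ≠ pv n hn j hj ∧
      ((pv n hn i hi).1 ∩ (pv n hn j hj).1).card = 2 - 1 := h
  have hij : i ≠ j := by
    intro heq; subst heq; exact hne rfl
  have hcard' : (pe n hn i ∩ pe n hn j).card = 1 := hcard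
  have hnonempty : (pe n hn i ∩ pe n hn j).Nonempty := by
    rw [← Finset.card_pos, hcard']; omega
  obtain ⟨x, hx⟩ := hnonempty
  rw [Finset.mem_inter, mem_pe hn hi, mem_pe hn hj] at hx
  omega

lemma mem_pV (hn : 2 ≤ n) {u : Finset (Fin n)} (hu : u ∈ pV n hn) :
    ∃ i, ∃ h : i < n - 1, u = pe n hn i := by
  obtain ⟨i, hi, rfl⟩ := Finset.mem_image.mp hu
  exact ⟨i, Finset.mem_range.mp hi, rfl⟩

lemma isDual (n : ℕ) (hn : 2 ≤ n) : IsDualGraph 2 n (pV n hn) := by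
  have h0 : (0 : ℕ) < n - 1 := by omega
  refine ⟨⟨pe n hn 0, Finset.mem_image_of_mem _ (Finset.mem_range.mpr h0)⟩, ?_, ?_⟩
  · intro u hu
    obtain ⟨i, hi, rfl⟩ := mem_pV hn hu
    exact pe_card hn hi
  · have reach : ∀ i (hi : i < n - 1),
        (adjGraph n 2 (pV n hn)).Reachable (pv n hn 0 h0) (pv n hn i hi) := by
      intro i
      induction i with
      | zero => intro _; rfl
      | succ i ih =>
        intro hi
        exact (ih (by omega)).trans (pv_adj hn hi).reachable
    intro u v
    obtain ⟨i, hi, hu⟩ := mem_pV hn u.2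
    obtain ⟨j, hj, hv⟩ := mem_pV hn v.2
    have hu' : u = pv n hn i hi := Subtype.ext hu
    have hv' : v = pv n hn j hj := Subtype.ext hv
    subst hu' hv'
    by_cases hdisj : (pv n hn i hi).1 ∩ (pv n hn j hj).1 = ∅
    · obtain ⟨w⟩ := (reach i hi).symm.trans (reach j hj)
      exact ⟨w, by simp [hdisj]⟩
    · have hnonempty := Finset.nonempty_iff_ne_empty.mpr hdisj
      obtain ⟨x, hx⟩ := hnonempty
      rw [Finset.mem_inter] at hx
      have hxi := (mem_pe hn hi).mp hx.1
      have hxj := (mem_pe hn hj).mp hx.2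
      have : i = j ∨ j = i + 1 ∨ i = j + 1 := by omega
      rcases this with rfl | rfl | rfl
      · exact ⟨Walk.nil, by simp⟩
      · refine ⟨Walk.cons (pv_adj hn hj) Walk.nil, ?_⟩
        intro y hy
        simp only [Walk.support_cons, Walk.support_nil, List.mem_cons,
          List.mem_singleton] at hy
        rcases hy with rfl | rfl | h
        · exact Finset.inter_subset_left
        · exact Finset.inter_subset_right
        · simp at h
      · refine ⟨(Walk.cons (pv_adj hn hi) Walk.nil).reverse, ?_⟩
        intro y hy
        rw [Walk.support_reverse, List.mem_reverse] at hy
        simp only [Walk.support_cons, Walk.support_nil, List.mem_cons,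
          List.mem_singleton] at hy
        rcases hy with rfl | rfl | h
        · exact Finset.inter_subset_right
        · exact Finset.inter_subset_left
        · simp at h

lemma abs_sub_le_walk {α : Type*} {G : SimpleGraph α} (F : α → ℤ)
    (hF : ∀ a b, G.Adj a b → |F a - F b| ≤ 2) :
    ∀ {u v : α} (w : G.Walk u v), |F u - F v| ≤ 2 * w.length := by
  intro u v w
  induction w with
  | nil => simp
  | @cons a b c h q ih =>
    calc |F a - F c| ≤ |F a - F b| + |F b - F c| := abs_sub_le _ _ _
    _ ≤ 2 + 2 * q.length := add_le_add (hF _ _ h) ih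
    _ = 2 * (Walk.cons h q).length := by rw [Walk.length_cons]; push_cast; ring

noncomputable def Fsum (n : ℕ) (hn : 2 ≤ n) (u : {x : Finset (Fin n) // x ∈ pV n hn}) : ℤ :=
  ∑ x ∈ u.1, ((x : ℕ) : ℤ)

lemma Fsum_pe (hn : 2 ≤ n) {i : ℕ} (hi : i < n - 1) :
    Fsum n hn (pv n hn i hi) = 2 * i + 1 := by
  show (∑ x ∈ pe n hn i, ((x : ℕ) : ℤ)) = 2 * i + 1
  rw [pe_eq hn hi, Finset.sum_pair (by simp [Fin.ext_iff])]
  push_cast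
  ring

lemma Fsum_step (hn : 2 ≤ n) : ∀ a b, (adjGraph n 2 (pV n hn)).Adj a b →
    |Fsum n hn a - Fsum n hn b| ≤ 2 := by
  intro a b hab
  obtain ⟨i, hi, ha⟩ := mem_pV hn a.2
  obtain ⟨j, hj, hb⟩ := mem_pV hn b.2
  have ha' : a = pv n hn i hi := Subtype.ext ha
  have hb' : b = pv n hn j hj := Subtype.ext hb
  subst ha' hb'
  have hidx := adj_idx hn hi hj hab
  rw [Fsum_pe hn hi, Fsum_pe hn hj, abs_le]
  omega

lemma dist_lb (n : ℕ) (hn : 2 ≤ n)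
    (hr : (adjGraph n 2 (pV n hn)).Reachable (pv n hn 0 (by omega)) (pv n hn (n-2) (by omega))) :
    n - 2 ≤ (adjGraph n 2 (pV n hn)).dist (pv n hn 0 (by omega)) (pv n hn (n-2) (by omega)) := by
  obtain ⟨p, hp⟩ := hr.exists_walk_length_eq_dist
  have h1 := abs_sub_le_walk (Fsum n hn) (Fsum_step hn) p
  rw [Fsum_pe hn (by omega), Fsum_pe hn (by omega), hp] at h1
  have h2 : |(2 * (0:ℕ) + 1 : ℤ) - (2 * (n - 2 : ℕ) + 1)| = 2 * (n - 2 : ℕ) := by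
    rw [abs_sub_comm]
    simp
  rw [h2] at h1
  omega


end MuTwo

/-- μ(2,n) = n − 2 for all n ≥ 2. -/
theorem mu_two (n : ℕ) (hn : 2 ≤ n) :
    (∀ V : Finset (Finset (Fin n)), IsDualGraph 2 n V →
      (adjGraph n 2 V).diam ≤ n - 2) ∧
    (∃ V : Finset (Finset (Fin n)), IsDualGraph 2 n V ∧
      (adjGraph n 2 V).diam = n - 2) := by
  constructor
  · intro V hV
    exact MuTwo.diam_le hn hV
  · refine ⟨MuTwo.pV n hn, MuTwo.isDual n hn, ?_⟩
    have hd := MuTwo.isDual n hn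
    have hub := MuTwo.diam_le hn hd
    have hne : (adjGraph n 2 (MuTwo.pV n hn)).ediam ≠ ⊤ :=
      ne_top_of_le_ne_top (by simp) (MuTwo.ediam_le hn hd)
    have hreach : (adjGraph n 2 (MuTwo.pV n hn)).Reachable
        (MuTwo.pv n hn 0 (by omega)) (MuTwo.pv n hn (n-2) (by omega)) :=
      (MuTwo.conn hd).preconnected _ _
    have hlb := le_trans (MuTwo.dist_lb n hn hreach) (dist_le_diam hne)
    omega
end

section
/- For every integer d ≥ 3, μ(d, d+3) = 3: every dual graph of type (d, d+3) has diameter at most 3, and there exists a dual graph of type (d, d+3) whose diameter is exactly 3. -/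
open SimpleGraph

open Finset in
lemma find_step {n d : ℕ} {V : Finset (Finset (Fin n))} (a : {x : Finset (Fin n) // x ∈ V} → ℕ)
    (t : ℕ)
    (hstep : ∀ x y : {x : Finset (Fin n) // x ∈ V}, (adjGraph n d V).Adj x y → a x ≤ a y + 1)
    {u v : {x : Finset (Fin n) // x ∈ V}} (w : (adjGraph n d V).Walk u v)
    (h1 : t + 1 ≤ a u) (h2 : a v ≤ t) :
    ∃ x y, (adjGraph n d V).Adj x y ∧ x ∈ w.support ∧ y ∈ w.support ∧
      a x = t + 1 ∧ a y ≤ t := by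
  revert h1 h2
  induction w with
  | nil => omega
  | @cons u b v h p ih =>
    intro h1 h2
    by_cases hb : a b ≤ t
    · refine ⟨u, b, h, ?_, ?_, ?_, hb⟩
      · simp [SimpleGraph.Walk.support_cons]
      · simp [SimpleGraph.Walk.support_cons, SimpleGraph.Walk.start_mem_support]
      · have := hstep u b h
        omega
    · obtain ⟨x, y, hxy, hxs, hys, hax, hay⟩ := ih (by omega) h2
      exact ⟨x, y, hxy, by simp [SimpleGraph.Walk.support_cons, hxs],
        by simp [SimpleGraph.Walk.support_cons, hys], hax, hay⟩


lemma edist_le_three (d : ℕ) (hd : 3 ≤ d) (V : Finset (Finset (Fin (d + 3))))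
    (hV : IsDualGraph d (d + 3) V) (u v : {x : Finset (Fin (d + 3)) // x ∈ V}) :
    (adjGraph (d + 3) d V).edist u v ≤ 3 := by
  set G := adjGraph (d + 3) d V with hG
  have hcard : ∀ x : {x : Finset (Fin (d + 3)) // x ∈ V}, x.1.card = d :=
    fun x => hV.card_eq x.1 x.2
  -- step inequality
  have hstep : ∀ x y : {x : Finset (Fin (d + 3)) // x ∈ V}, G.Adj x y →
      ∀ s : Finset (Fin (d + 3)), (x.1 ∩ s).card ≤ (y.1 ∩ s).card + 1 := by
    intro x y hxy s
    have h2 : (x.1 ∩ y.1).card = d - 1 := hxy.2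
    have h3 : (x.1 ∩ y.1).card + (x.1 \ y.1).card = x.1.card :=
      Finset.card_inter_add_card_sdiff _ _
    have h4 : (x.1 \ y.1).card = 1 := by rw [hcard x] at h3; omega
    have h5 : x.1 ∩ s ⊆ (y.1 ∩ s) ∪ (x.1 \ y.1) := by
      intro t ht
      simp only [Finset.mem_inter] at ht
      by_cases hty : t ∈ y.1
      · exact Finset.mem_union_left _ (Finset.mem_inter.mpr ⟨hty, ht.2⟩)
      · exact Finset.mem_union_right _ (Finset.mem_sdiff.mpr ⟨ht.1, hty⟩)
    calc (x.1 ∩ s).card ≤ ((y.1 ∩ s) ∪ (x.1 \ y.1)).card := Finset.card_le_card h5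
      _ ≤ (y.1 ∩ s).card + (x.1 \ y.1).card := Finset.card_union_le _ _
      _ = (y.1 ∩ s).card + 1 := by rw [h4]
  have hsum : (u.1 ∪ v.1).card + (u.1 ∩ v.1).card = d + d := by
    rw [Finset.card_union_add_card_inter, hcard, hcard]
  have hub : (u.1 ∪ v.1).card ≤ d + 3 := by
    have := Finset.card_le_univ (u.1 ∪ v.1)
    simpa using this
  have hlow : d - 3 ≤ (u.1 ∩ v.1).card := by omega
  have hup : (u.1 ∩ v.1).card ≤ d := by
    have hss : u.1 ∩ v.1 ⊆ u.1 := Finset.inter_subset_left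
    have := Finset.card_le_card hss
    rw [hcard] at this; exact this
  -- conclusion helper
  have hconc : ∀ x y : {x : Finset (Fin (d + 3)) // x ∈ V}, G.Adj u x → G.Adj x y →
      d - 1 ≤ (y.1 ∩ v.1).card → G.edist u v ≤ 3 := by
    intro x y h1 h2 h3
    have hle : (y.1 ∩ v.1).card ≤ d := by
      have hss : y.1 ∩ v.1 ⊆ v.1 := Finset.inter_subset_right
      have := Finset.card_le_card hss
      rw [hcard] at this; exact this
    rcases Nat.eq_or_lt_of_le h3 with heq | hlt
    · -- y ~ v
      have hne : y ≠ v := by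
        intro h
        rw [h, Finset.inter_self, hcard] at heq
        omega
      have h3' : G.Adj y v := ⟨hne, heq.symm⟩
      have := SimpleGraph.edist_le (Walk.cons h1 (Walk.cons h2 (Walk.cons h3' Walk.nil)))
      simpa using this
    · -- y = v
      have hcd : (y.1 ∩ v.1).card = d := by omega
      have e1 : y.1 ∩ v.1 = v.1 :=
        Finset.eq_of_subset_of_card_le Finset.inter_subset_right (by rw [hcard, hcd])
      have e2 : v.1 ⊆ y.1 := by rw [← e1]; exact Finset.inter_subset_left
      have e3 : v.1 = y.1 := Finset.eq_of_subset_of_card_le e2 (by rw [hcard, hcard])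
      have : y = v := Subtype.ext e3.symm
      subst this
      have := SimpleGraph.edist_le (Walk.cons h1 (Walk.cons h2 Walk.nil))
      refine le_trans this (by norm_num)
  -- common walk analysis for the two far cases
  have hcommon : (u.1 ∩ v.1).card ≤ d - 2 →
      ∃ x y : {x : Finset (Fin (d + 3)) // x ∈ V}, G.Adj u x ∧ G.Adj x y ∧
        u.1 ∩ v.1 ⊆ y.1 ∧ (y.1 ∩ u.1).card ≤ d - 2 := by
    intro hcle
    obtain ⟨w, hw⟩ := hV.locally_connected u v
    obtain ⟨x, y, hxy, hxs, hys, hax, hay⟩ :=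
      find_step (fun z => (z.1 ∩ u.1).card) (d - 2)
        (fun x y h => hstep x y h u.1) w
        (by show d - 2 + 1 ≤ (u.1 ∩ u.1).card; rw [Finset.inter_self, hcard]; omega)
        (by show (v.1 ∩ u.1).card ≤ d - 2; rw [Finset.inter_comm]; omega)
    have hux : G.Adj u x := by
      refine ⟨?_, ?_⟩
      · intro h
        rw [← h, Finset.inter_self, hcard] at hax
        omega
      · rw [Finset.inter_comm]; omega
    exact ⟨x, y, hux, hxy, hw y hys, hay⟩
  -- main case analysis
  have hcases : (u.1 ∩ v.1).card = d ∨ (u.1 ∩ v.1).card = d - 1 ∨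
      (u.1 ∩ v.1).card = d - 2 ∨ (u.1 ∩ v.1).card = d - 3 := by omega
  rcases hcases with hc | hc | hc | hc
  · -- u = v
    have h1 : u.1 ∩ v.1 = u.1 :=
      Finset.eq_of_subset_of_card_le Finset.inter_subset_left (by rw [hcard, hc])
    have h2 : u.1 ⊆ v.1 := by rw [← h1]; exact Finset.inter_subset_right
    have h3 : u.1 = v.1 := Finset.eq_of_subset_of_card_le h2 (by rw [hcard, hcard])
    have : u = v := Subtype.ext h3
    rw [this]
    simp
  · -- adjacent
    have hne : u ≠ v := by
      intro h
      rw [h, Finset.inter_self, hcard] at hc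
      omega
    have : G.Adj u v := ⟨hne, hc⟩
    calc G.edist u v ≤ 1 := (SimpleGraph.edist_eq_one_iff_adj.mpr this).le
      _ ≤ 3 := by norm_num
  · -- (u ∩ v).card = d - 2
    obtain ⟨x, y, hux, hxy, hey, hyu_le⟩ := hcommon (by omega)
    have heyu : u.1 ∩ v.1 ⊆ y.1 ∩ u.1 :=
      Finset.subset_inter hey Finset.inter_subset_left
    have h1 : u.1 ∩ v.1 = y.1 ∩ u.1 := by
      apply Finset.eq_of_subset_of_card_le heyu
      omega
    have h2 : (y.1 ∪ v.1) ∩ u.1 = u.1 ∩ v.1 := by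
      rw [Finset.union_inter_distrib_right, ← h1, Finset.inter_comm v.1 u.1,
        Finset.union_self]
    have h3 : ((y.1 ∪ v.1) ∩ u.1).card + ((y.1 ∪ v.1) \ u.1).card = (y.1 ∪ v.1).card :=
      Finset.card_inter_add_card_sdiff _ _
    have h4 : ((y.1 ∪ v.1) \ u.1).card ≤ 3 := by
      have hsub : (y.1 ∪ v.1) \ u.1 ⊆ Finset.univ \ u.1 :=
        Finset.sdiff_subset_sdiff (Finset.subset_univ _) le_rfl
      have := Finset.card_le_card hsub
      rw [Finset.card_sdiff_of_subset (Finset.subset_univ _)] at this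
      simp only [Finset.card_univ, Fintype.card_fin, hcard] at this
      omega
    have h5 : (y.1 ∪ v.1).card + (y.1 ∩ v.1).card = d + d := by
      rw [Finset.card_union_add_card_inter, hcard, hcard]
    rw [h2, hc] at h3
    exact hconc x y hux hxy (by omega)
  · -- (u ∩ v).card = d - 3
    obtain ⟨x, y, hux, hxy, hey, hyu_le⟩ := hcommon (by omega)
    have huniv : u.1 ∪ v.1 = Finset.univ := by
      apply Finset.eq_univ_of_card
      simp only [Fintype.card_fin]
      omega
    have h1 : (y.1 ∩ u.1) ∪ (y.1 ∩ v.1) = y.1 := by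
      rw [← Finset.inter_union_distrib_left, huniv, Finset.inter_univ]
    have h2 : (y.1 ∩ u.1) ∩ (y.1 ∩ v.1) = u.1 ∩ v.1 := by
      rw [Finset.inter_inter_inter_comm, Finset.inter_self]
      exact Finset.inter_eq_right.mpr hey
    have h3 : ((y.1 ∩ u.1) ∪ (y.1 ∩ v.1)).card + ((y.1 ∩ u.1) ∩ (y.1 ∩ v.1)).card =
        (y.1 ∩ u.1).card + (y.1 ∩ v.1).card :=
      Finset.card_union_add_card_inter _ _
    rw [h1, h2, hcard, hc] at h3
    exact hconc x y hux hxy (by omega)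

open Finset

/-- the complement of the image of a 3-subset of `Fin 6` in `Fin (d+3)` -/
def csd (d : ℕ) (hd : 3 ≤ d) (s : Finset (Fin 6)) : Finset (Fin (d + 3)) :=
  (s.image (Fin.castLE (by omega)))ᶜ

def VVd (d : ℕ) (hd : 3 ≤ d) : Finset (Finset (Fin (d + 3))) :=
  {csd d hd {0, 1, 2}, csd d hd {0, 1, 3}, csd d hd {0, 3, 4}, csd d hd {3, 4, 5}}

section helpers
variable {d : ℕ} (hd : 3 ≤ d)

lemma csd_inj {s t : Finset (Fin 6)} (h : csd d hd s = csd d hd t) : s = t := by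
  unfold csd at h
  have h2 := compl_injective h
  exact Finset.image_injective (Fin.castLE_injective _) h2

lemma csd_inter (s t : Finset (Fin 6)) :
    csd d hd s ∩ csd d hd t = csd d hd (s ∪ t) := by
  unfold csd
  rw [Finset.image_union, Finset.compl_union]

lemma csd_card (s : Finset (Fin 6)) : (csd d hd s).card = (d + 3) - s.card := by
  unfold csd
  rw [Finset.card_compl, Finset.card_image_of_injective _ (Fin.castLE_injective _)]
  simp

lemma csd_subset {s t : Finset (Fin 6)} (h : s ⊆ t) : csd d hd t ⊆ csd d hd s := by
  unfold csd
  exact Finset.compl_subset_compl.mpr (Finset.image_subset_image h)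

end helpers

section main
variable {d : ℕ} (hd : 3 ≤ d)

lemma VVd_isDual : IsDualGraph d (d + 3) (VVd d hd) := by
  constructor
  · exact ⟨csd d hd {0, 1, 2}, by simp [VVd]⟩
  · intro u hu
    rw [VVd] at hu
    simp only [Finset.mem_insert, Finset.mem_singleton] at hu
    rcases hu with rfl | rfl | rfl | rfl
    · rw [csd_card, show ({0,1,2} : Finset (Fin 6)).card = 3 from by decide]; omega
    · rw [csd_card, show ({0,1,3} : Finset (Fin 6)).card = 3 from by decide]; omega
    · rw [csd_card, show ({0,3,4} : Finset (Fin 6)).card = 3 from by decide]; omega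
    · rw [csd_card, show ({3,4,5} : Finset (Fin 6)).card = 3 from by decide]; omega
  · -- locally connected
    have hadj : ∀ {s t : Finset (Fin 6)} (hs : csd d hd s ∈ VVd d hd)
        (ht : csd d hd t ∈ VVd d hd), s ≠ t → (s ∪ t).card = 4 →
        (adjGraph (d + 3) d (VVd d hd)).Adj ⟨csd d hd s, hs⟩ ⟨csd d hd t, ht⟩ := by
      intro s t hs ht hne hcard
      constructor
      · intro h
        exact hne (csd_inj hd (congrArg Subtype.val h))
      · show (csd d hd s ∩ csd d hd t).card = d - 1
        rw [csd_inter, csd_card, hcard]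
        omega
    have hsubc : ∀ {s t r : Finset (Fin 6)}, r ⊆ s ∪ t →
        csd d hd s ∩ csd d hd t ⊆ csd d hd r := by
      intro s t r h
      rw [csd_inter]
      exact csd_subset hd h
    have m1 : csd d hd {0, 1, 2} ∈ VVd d hd := by simp [VVd]
    have m2 : csd d hd {0, 1, 3} ∈ VVd d hd := by simp [VVd]
    have m3 : csd d hd {0, 3, 4} ∈ VVd d hd := by simp [VVd]
    have m4 : csd d hd {3, 4, 5} ∈ VVd d hd := by simp [VVd]
    -- helpers for producing walks
    set G := adjGraph (d + 3) d (VVd d hd) with hG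
    have trivnil : ∀ a : {x : Finset (Fin (d+3)) // x ∈ VVd d hd},
        ∃ w : G.Walk a a, ∀ x ∈ w.support, a.1 ∩ a.1 ⊆ x.1 := by
      intro a
      refine ⟨Walk.nil, ?_⟩
      intro x hx
      simp only [Walk.support_nil, List.mem_singleton] at hx
      subst hx
      exact Finset.inter_subset_left
    have triv : ∀ a b : {x : Finset (Fin (d+3)) // x ∈ VVd d hd}, G.Adj a b →
        ∃ w : G.Walk a b, ∀ x ∈ w.support, a.1 ∩ b.1 ⊆ x.1 := by
      intro a b h
      refine ⟨Walk.cons h Walk.nil, ?_⟩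
      intro x hx
      simp only [Walk.support_cons, Walk.support_nil, List.mem_cons,
        List.mem_singleton, List.not_mem_nil, or_false] at hx
      rcases hx with rfl | rfl
      · exact Finset.inter_subset_left
      · exact Finset.inter_subset_right
    have hswap : ∀ a b : {x : Finset (Fin (d+3)) // x ∈ VVd d hd},
        (∃ w : G.Walk a b, ∀ x ∈ w.support, a.1 ∩ b.1 ⊆ x.1) →
        ∃ w : G.Walk b a, ∀ x ∈ w.support, b.1 ∩ a.1 ⊆ x.1 := by
      rintro a b ⟨w, hw⟩
      refine ⟨w.reverse, ?_⟩
      intro x hx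
      rw [Finset.inter_comm]
      exact hw x (by simpa [Walk.support_reverse] using hx)
    -- basic adjacencies
    have a12 := hadj m1 m2 (by decide) (by decide)
    have a23 := hadj m2 m3 (by decide) (by decide)
    have a34 := hadj m3 m4 (by decide) (by decide)
    -- the two-step and three-step walks
    have w13 : ∃ w : G.Walk ⟨csd d hd {0,1,2}, m1⟩ ⟨csd d hd {0,3,4}, m3⟩,
        ∀ x ∈ w.support, csd d hd {0,1,2} ∩ csd d hd {0,3,4} ⊆ x.1 := by
      refine ⟨Walk.cons a12 (Walk.cons a23 Walk.nil), ?_⟩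
      intro x hx
      simp only [Walk.support_cons, Walk.support_nil, List.mem_cons,
        List.mem_singleton, List.not_mem_nil, or_false] at hx
      rcases hx with rfl | rfl | rfl
      · exact hsubc (by decide)
      · exact hsubc (by decide)
      · exact hsubc (by decide)
    have w24 : ∃ w : G.Walk ⟨csd d hd {0,1,3}, m2⟩ ⟨csd d hd {3,4,5}, m4⟩,
        ∀ x ∈ w.support, csd d hd {0,1,3} ∩ csd d hd {3,4,5} ⊆ x.1 := by
      refine ⟨Walk.cons a23 (Walk.cons a34 Walk.nil), ?_⟩
      intro x hx
      simp only [Walk.support_cons, Walk.support_nil, List.mem_cons,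
        List.mem_singleton, List.not_mem_nil, or_false] at hx
      rcases hx with rfl | rfl | rfl
      · exact hsubc (by decide)
      · exact hsubc (by decide)
      · exact hsubc (by decide)
    have w14 : ∃ w : G.Walk ⟨csd d hd {0,1,2}, m1⟩ ⟨csd d hd {3,4,5}, m4⟩,
        ∀ x ∈ w.support, csd d hd {0,1,2} ∩ csd d hd {3,4,5} ⊆ x.1 := by
      refine ⟨Walk.cons a12 (Walk.cons a23 (Walk.cons a34 Walk.nil)), ?_⟩
      intro x hx
      simp only [Walk.support_cons, Walk.support_nil, List.mem_cons,
        List.mem_singleton, List.not_mem_nil, or_false] at hx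
      rcases hx with rfl | rfl | rfl | rfl
      · exact hsubc (by decide)
      · exact hsubc (by decide)
      · exact hsubc (by decide)
      · exact hsubc (by decide)
    rintro ⟨u, hu⟩ ⟨v, hv⟩
    have hu' : u = csd d hd {0,1,2} ∨ u = csd d hd {0,1,3} ∨
        u = csd d hd {0,3,4} ∨ u = csd d hd {3,4,5} := by
      rw [VVd] at hu
      simpa using hu
    have hv' : v = csd d hd {0,1,2} ∨ v = csd d hd {0,1,3} ∨
        v = csd d hd {0,3,4} ∨ v = csd d hd {3,4,5} := by
      rw [VVd] at hv
      simpa using hv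
    rcases hu' with rfl | rfl | rfl | rfl <;> rcases hv' with rfl | rfl | rfl | rfl
    · exact trivnil _
    · exact triv _ _ a12
    · exact w13
    · exact w14
    · exact hswap _ _ (triv _ _ a12)
    · exact trivnil _
    · exact triv _ _ a23
    · exact w24
    · exact hswap _ _ w13
    · exact hswap _ _ (triv _ _ a23)
    · exact trivnil _
    · exact triv _ _ a34
    · exact hswap _ _ w14
    · exact hswap _ _ w24
    · exact hswap _ _ (triv _ _ a34)
    · exact trivnil _

end main

lemma short_walk {α : Type*} {G : SimpleGraph α} {A B : α} (p : G.Walk A B)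
    (hp : p.length ≤ 2) : A = B ∨ G.Adj A B ∨ ∃ m, G.Adj A m ∧ G.Adj m B := by
  cases p with
  | nil => exact Or.inl rfl
  | cons h q =>
    cases q with
    | nil => exact Or.inr (Or.inl h)
    | cons h' r =>
      cases r with
      | nil => exact Or.inr (Or.inr ⟨_, h, h'⟩)
      | cons h'' r' => simp [SimpleGraph.Walk.length_cons] at hp

lemma three_le_dist {d : ℕ} (hd : 3 ≤ d) :
    3 ≤ (adjGraph (d + 3) d (VVd d hd)).dist
      ⟨csd d hd {0,1,2}, by simp [VVd]⟩ ⟨csd d hd {3,4,5}, by simp [VVd]⟩ := by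
  set G := adjGraph (d + 3) d (VVd d hd) with hG
  set A : {x : Finset (Fin (d+3)) // x ∈ VVd d hd} := ⟨csd d hd {0,1,2}, by simp [VVd]⟩
  set B : {x : Finset (Fin (d+3)) // x ∈ VVd d hd} := ⟨csd d hd {3,4,5}, by simp [VVd]⟩
  have hreach : G.Reachable A B := ⟨((VVd_isDual hd).locally_connected A B).choose⟩
  have hcsd : ∀ s t : Finset (Fin 6), (csd d hd s ∩ csd d hd t).card =
      (d + 3) - (s ∪ t).card := by
    intro s t
    rw [csd_inter, csd_card]
  by_contra hcon
  push_neg at hcon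
  obtain ⟨p, hp⟩ := hreach.exists_walk_length_eq_dist
  have hp2 : p.length ≤ 2 := by omega
  rcases short_walk p hp2 with heq | hadj | ⟨m, h1, h2⟩
  · have : ({0,1,2} : Finset (Fin 6)) = {3,4,5} :=
      csd_inj hd (congrArg Subtype.val heq)
    exact absurd this (by decide)
  · have h2 := hadj.2
    rw [show (A.1 ∩ B.1) = csd d hd {0,1,2} ∩ csd d hd {3,4,5} from rfl] at h2
    rw [hcsd, show (({0,1,2} ∪ {3,4,5} : Finset (Fin 6))).card = 6 from by decide] at h2
    omega
  · obtain ⟨m, hm⟩ := m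
    have hm' : m = csd d hd {0,1,2} ∨ m = csd d hd {0,1,3} ∨
        m = csd d hd {0,3,4} ∨ m = csd d hd {3,4,5} := by
      rw [VVd] at hm
      simpa using hm
    rcases hm' with rfl | rfl | rfl | rfl
    · exact h1.1 rfl
    · have := h2.2
      rw [show ((⟨csd d hd {0,1,3}, hm⟩ : {x : Finset (Fin (d+3)) // x ∈ VVd d hd}).1 ∩ B.1)
        = csd d hd {0,1,3} ∩ csd d hd {3,4,5} from rfl, hcsd,
        show (({0,1,3} ∪ {3,4,5} : Finset (Fin 6))).card = 5 from by decide] at this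
      omega
    · have := h1.2
      rw [show (A.1 ∩ (⟨csd d hd {0,3,4}, hm⟩ : {x : Finset (Fin (d+3)) // x ∈ VVd d hd}).1)
        = csd d hd {0,1,2} ∩ csd d hd {0,3,4} from rfl, hcsd,
        show (({0,1,2} ∪ {0,3,4} : Finset (Fin 6))).card = 5 from by decide] at this
      omega
    · exact h2.1 rfl


/-- μ(d, d+3) = 3 for all d ≥ 3. -/
theorem mu_d_dplus3 (d : ℕ) (hd : 3 ≤ d) :
    (∀ V : Finset (Finset (Fin (d + 3))), IsDualGraph d (d + 3) V →
      (adjGraph (d + 3) d V).diam ≤ 3) ∧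
    (∃ V : Finset (Finset (Fin (d + 3))), IsDualGraph d (d + 3) V ∧
      (adjGraph (d + 3) d V).diam = 3) := by
  have hub : ∀ V : Finset (Finset (Fin (d + 3))), IsDualGraph d (d + 3) V →
      (adjGraph (d + 3) d V).diam ≤ 3 := by
    intro V hV
    have h1 : (adjGraph (d + 3) d V).ediam ≤ 3 :=
      SimpleGraph.ediam_le_of_edist_le (fun u v => edist_le_three d hd V hV u v)
    have h2 := ENat.toNat_le_toNat h1 (by simp)
    simpa [SimpleGraph.diam] using h2
  refine ⟨hub, ⟨VVd d hd, VVd_isDual hd, ?_⟩⟩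
  have h1 := hub (VVd d hd) (VVd_isDual hd)
  have h3 := three_le_dist hd
  have hne : (adjGraph (d + 3) d (VVd d hd)).ediam ≠ ⊤ := by
    have hle : (adjGraph (d + 3) d (VVd d hd)).ediam ≤ 3 :=
      SimpleGraph.ediam_le_of_edist_le
        (fun u v => edist_le_three d hd _ (VVd_isDual hd) u v)
    intro h
    rw [h] at hle
    exact absurd hle (by simp)
  have h4 := SimpleGraph.dist_le_diam (G := adjGraph (d + 3) d (VVd d hd)) hne
    (u := ⟨csd d hd {0,1,2}, by simp [VVd]⟩) (v := ⟨csd d hd {3,4,5}, by simp [VVd]⟩)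
  omega
end
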